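/- Let F be a field, t a natural number, and N a finite subset of F with |N| ≥ t+1. Suppose {f_i}_{i∈N} is a family of univariate polynomials over F, each of degree at most t, such that f_i(j) = f_j(i) for all i, j ∈ N. Then there exists a unique bivariate polynomial f over F of degree at most t in each variable, symmetric (f(x,y) = f(y,x)), such that f(i,j) = f_i(j) for all i, j ∈ N. -/

import Mathlib

/-- A bivariate polynomial (in variables `X 0`, `X 1`) is symmetric if swapping
the two variables leaves it unchanged. -/
def MvSymm {F : Type*} [CommSemiring F] (g : MvPolynomial (Fin 2) F) : Prop :=
  MvPolynomial.rename (Equiv.swap (0 : Fin 2) 1) g = g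


open MvPolynomial

section Helpers
variable {F : Type*} [Field F]

lemma helper_eval_aeval (v : Fin 2 → F) (k : Fin 2) (p : Polynomial F) :
    MvPolynomial.eval v (Polynomial.aeval (MvPolynomial.X k : MvPolynomial (Fin 2) F) p)
      = p.eval (v k) := by
  induction p using Polynomial.induction_on' with
  | add p q hp hq => simp [hp, hq]
  | monomial n a => simp [Polynomial.aeval_monomial]

lemma helper_degreeOf_aeval_ne (p : Polynomial F) {k i : Fin 2} (h : i ≠ k) :
    degreeOf i (Polynomial.aeval (MvPolynomial.X k : MvPolynomial (Fin 2) F) p) = 0 := by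
  induction p using Polynomial.induction_on' with
  | add p q hp hq =>
      have := degreeOf_add_le i (Polynomial.aeval (MvPolynomial.X k : MvPolynomial (Fin 2) F) p)
        (Polynomial.aeval (MvPolynomial.X k : MvPolynomial (Fin 2) F) q)
      simp only [map_add] at *
      omega
  | monomial n a =>
      rw [Polynomial.aeval_monomial]
      refine Nat.le_zero.mp ?_
      refine (degreeOf_mul_le _ _ _).trans ?_
      have h1 : degreeOf i (algebraMap F (MvPolynomial (Fin 2) F) a) = 0 := degreeOf_C a i
      have h2 : degreeOf i ((MvPolynomial.X k : MvPolynomial (Fin 2) F) ^ n) = 0 := by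
        refine Nat.le_zero.mp ((degreeOf_pow_le _ _ _).trans ?_)
        rw [degreeOf_X, if_neg h]
        simp
      omega

lemma helper_degreeOf_aeval (p : Polynomial F) (k : Fin 2) :
    degreeOf k (Polynomial.aeval (MvPolynomial.X k : MvPolynomial (Fin 2) F) p) ≤ p.natDegree := by
  conv_lhs => rw [p.as_sum_support, map_sum]
  refine (degreeOf_sum_le _ _ _).trans (Finset.sup_le fun n hn => ?_)
  rw [Polynomial.aeval_monomial]
  refine (degreeOf_mul_le _ _ _).trans ?_
  rw [show (algebraMap F (MvPolynomial (Fin 2) F)) (p.coeff n) = MvPolynomial.C (p.coeff n) from rfl, degreeOf_C, zero_add]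
  refine le_trans (degreeOf_pow_le k (MvPolynomial.X k : MvPolynomial (Fin 2) F) n) ?_
  rw [degreeOf_X, if_pos rfl, mul_one]
  exact Polynomial.le_natDegree_of_mem_supp n hn

end Helpers

open MvPolynomial

section Vanish
variable {F : Type*} [Field F]

lemma helper_vanish1 {t : ℕ} {S : Finset F} (hS : t < S.card) (R : MvPolynomial (Fin 1) F)
    (hdeg : degreeOf 0 R ≤ t) (hv : ∀ j ∈ S, MvPolynomial.eval ![j] R = 0) : R = 0 := by
  set P := finSuccEquiv F 0 R with hP
  have hinj : Function.Injective (MvPolynomial.eval (![] : Fin 0 → F)) := by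
    intro a b hab
    obtain ⟨x, rfl⟩ := MvPolynomial.C_surjective (Fin 0) a
    obtain ⟨y, rfl⟩ := MvPolynomial.C_surjective (Fin 0) b
    simpa using hab
  have hQ : Polynomial.map (MvPolynomial.eval (![] : Fin 0 → F)) P = 0 := by
    apply Polynomial.eq_zero_of_natDegree_lt_card_of_eval_eq_zero' _ S
    · intro j hj
      have := MvPolynomial.eval_eq_eval_mv_eval' (![] : Fin 0 → F) j R
      rw [show (Fin.cons j (![] : Fin 0 → F)) = ![j] from rfl] at this
      rw [show Polynomial.map (MvPolynomial.eval (![] : Fin 0 → F)) P = Polynomial.map (MvPolynomial.eval (![] : Fin 0 → F)) ((finSuccEquiv F 0) R) from rfl, ← this]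
      exact hv j hj
    · calc (Polynomial.map (MvPolynomial.eval (![] : Fin 0 → F)) P).natDegree
          ≤ P.natDegree := Polynomial.natDegree_map_le
        _ = degreeOf 0 R := MvPolynomial.natDegree_finSuccEquiv R
        _ ≤ t := hdeg
        _ < S.card := hS
  have hP0 : P = 0 := Polynomial.map_injective _ hinj (by simpa using hQ)
  have := (map_eq_zero_iff _ (finSuccEquiv F 0).injective).mp hP0
  exact this

lemma helper_vanish2 {t : ℕ} {S : Finset F} (hS : t < S.card) (g : MvPolynomial (Fin 2) F)
    (h0 : degreeOf 0 g ≤ t) (h1 : degreeOf 1 g ≤ t)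
    (hv : ∀ i ∈ S, ∀ j ∈ S, MvPolynomial.eval ![i, j] g = 0) : g = 0 := by
  set P := finSuccEquiv F 1 g with hP
  have hcoeff : ∀ k, P.coeff k = 0 := by
    intro k
    apply helper_vanish1 hS
    · exact (degreeOf_coeff_finSuccEquiv g 0 k).trans h1
    · intro j hj
      have hQ : Polynomial.map (MvPolynomial.eval ![j]) P = 0 := by
        apply Polynomial.eq_zero_of_natDegree_lt_card_of_eval_eq_zero' _ S
        · intro i hi
          have := MvPolynomial.eval_eq_eval_mv_eval' (![j] : Fin 1 → F) i g
          rw [show (Fin.cons i (![j] : Fin 1 → F)) = ![i, j] from rfl] at this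
          rw [show Polynomial.map (MvPolynomial.eval ![j]) P = Polynomial.map (MvPolynomial.eval ![j]) ((finSuccEquiv F (Nat.succ 0)) g) from rfl, ← this]
          exact hv i hi j hj
        · calc (Polynomial.map (MvPolynomial.eval ![j]) P).natDegree
              ≤ P.natDegree := Polynomial.natDegree_map_le
            _ = degreeOf 0 g := MvPolynomial.natDegree_finSuccEquiv g
            _ ≤ t := h0
            _ < S.card := hS
      have := congrArg (fun q => q.coeff k) hQ
      simpa [Polynomial.coeff_map] using this
  have hP0 : P = 0 := Polynomial.ext fun k => by simp [hcoeff k]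
  exact (map_eq_zero_iff _ (finSuccEquiv F 1).injective).mp hP0

end Vanish

open MvPolynomial

section PE
variable {F : Type*} [Field F]

lemma helper_pe_eval (c j : F) (g : MvPolynomial (Fin 2) F) :
    Polynomial.eval j (MvPolynomial.aeval ![Polynomial.C c, Polynomial.X] g)
      = MvPolynomial.eval ![c, j] g := by
  rw [MvPolynomial.aeval_def]
  have := MvPolynomial.eval₂_comp_left (Polynomial.evalRingHom j)
    (algebraMap F (Polynomial F)) ![Polynomial.C c, Polynomial.X] g
  rw [show (Polynomial.evalRingHom j : Polynomial F → F) = Polynomial.eval j from rfl] at this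
  rw [this]
  have h1 : (Polynomial.evalRingHom j).comp (algebraMap F (Polynomial F)) = RingHom.id F := by
    ext x; simp
  have h2 : (Polynomial.eval j : Polynomial F → F) ∘ ![Polynomial.C c, Polynomial.X]
      = ![c, j] := by
    funext k; fin_cases k <;> simp
  rw [h1, h2, MvPolynomial.eval]
  rfl

lemma helper_pe_natDegree (c : F) (g : MvPolynomial (Fin 2) F) :
    (MvPolynomial.aeval ![Polynomial.C c, Polynomial.X] g).natDegree ≤ degreeOf 1 g := by
  rw [MvPolynomial.aeval_def, MvPolynomial.eval₂_eq']
  apply Polynomial.natDegree_sum_le_of_forall_le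
  intro m hm
  refine (Polynomial.natDegree_mul_le).trans ?_
  have h1 : (algebraMap F (Polynomial F) (coeff m g)).natDegree = 0 := by
    simp [Polynomial.algebraMap_eq]
  rw [h1, zero_add, Fin.prod_univ_two]
  refine (Polynomial.natDegree_mul_le).trans ?_
  have h2 : ((![Polynomial.C c, Polynomial.X] : Fin 2 → Polynomial F) 0 ^ m 0).natDegree = 0 := by
    rw [show (![Polynomial.C c, Polynomial.X] : Fin 2 → Polynomial F) 0 = Polynomial.C c from rfl,
      ← Polynomial.C_pow]
    exact Polynomial.natDegree_C _
  have h3 : ((![Polynomial.C c, Polynomial.X] : Fin 2 → Polynomial F) 1 ^ m 1).natDegree ≤ m 1 := by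
    simp
  have h4 : m 1 ≤ degreeOf 1 g := (degreeOf_le_iff.mp le_rfl) m hm
  omega

end PE

open MvPolynomial in
theorem stmt_0 (F : Type*) [Field F] (t : ℕ) (N : Finset F) (hN : t + 1 ≤ N.card)
    (f : F → Polynomial F)
    (hdeg : ∀ i ∈ N, (f i).natDegree ≤ t)
    (hsym : ∀ i ∈ N, ∀ j ∈ N, (f i).eval j = (f j).eval i) :
    ∃! g : MvPolynomial (Fin 2) F,
      MvPolynomial.degreeOf 0 g ≤ t ∧ MvPolynomial.degreeOf 1 g ≤ t ∧
      MvSymm g ∧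
      ∀ i ∈ N, ∀ j ∈ N, MvPolynomial.eval ![i, j] g = (f i).eval j := by
  classical
  obtain ⟨S, hSN, hScard⟩ := Finset.exists_subset_card_eq hN
  have hStS : t < S.card := by omega
  have hinj : Set.InjOn (id : F → F) S := Function.injective_id.injOn
  set A : Polynomial F → MvPolynomial (Fin 2) F :=
    fun p => Polynomial.aeval (MvPolynomial.X 0) p with hA
  set B : Polynomial F → MvPolynomial (Fin 2) F :=
    fun p => Polynomial.aeval (MvPolynomial.X 1) p with hB
  set g : MvPolynomial (Fin 2) F := ∑ i ∈ S, A (Lagrange.basis S id i) * B (f i) with hgdef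
  have hdeg_basis : ∀ i ∈ S, (Lagrange.basis S id i).natDegree ≤ t := by
    intro i hi
    rw [Lagrange.natDegree_basis hinj hi, hScard]
    omega
  -- degree bounds
  have hd0 : degreeOf 0 g ≤ t := by
    rw [hgdef]
    refine (degreeOf_sum_le _ _ _).trans (Finset.sup_le fun i hi => ?_)
    refine (degreeOf_mul_le _ _ _).trans ?_
    have h1 : degreeOf 0 (A (Lagrange.basis S id i)) ≤ t :=
      (helper_degreeOf_aeval _ 0).trans (hdeg_basis i hi)
    have h2 : degreeOf 0 (B (f i)) = 0 :=
      helper_degreeOf_aeval_ne _ (show (0 : Fin 2) ≠ 1 by decide)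
    omega
  have hd1 : degreeOf 1 g ≤ t := by
    rw [hgdef]
    refine (degreeOf_sum_le _ _ _).trans (Finset.sup_le fun i hi => ?_)
    refine (degreeOf_mul_le _ _ _).trans ?_
    have h1 : degreeOf 1 (A (Lagrange.basis S id i)) = 0 :=
      helper_degreeOf_aeval_ne _ (show (1 : Fin 2) ≠ 0 by decide)
    have h2 : degreeOf 1 (B (f i)) ≤ t :=
      (helper_degreeOf_aeval _ 1).trans (hdeg i (hSN hi))
    omega
  -- evaluation formula
  have hev : ∀ x y : F, MvPolynomial.eval ![x, y] g
      = ∑ i ∈ S, (Lagrange.basis S id i).eval x * (f i).eval y := by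
    intro x y
    rw [hgdef, map_sum]
    refine Finset.sum_congr rfl fun i hi => ?_
    rw [map_mul, hA, hB, helper_eval_aeval, helper_eval_aeval]
    norm_num
  -- basis evaluation sums
  have hsingle : ∀ (r : F → F), ∀ j ∈ S,
      ∑ i ∈ S, r i * (Lagrange.basis S id i).eval j = r j := by
    intro r j hj
    rw [Finset.sum_eq_single_of_mem j hj]
    · rw [show Polynomial.eval j (Lagrange.basis S id j) = 1 from
        Lagrange.eval_basis_self hinj hj, mul_one]
    · intro b hb hbj
      rw [show Polynomial.eval j (Lagrange.basis S id b) = 0 from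
        Lagrange.eval_basis_of_ne (v := id) hbj hj, mul_zero]
  have hinterp : ∀ p : Polynomial F, p.natDegree ≤ t → ∀ x : F,
      ∑ i ∈ S, (Lagrange.basis S id i).eval x * p.eval i = p.eval x := by
    intro p hp x
    have hdlt : p.degree < (S.card : WithBot ℕ) :=
      lt_of_le_of_lt Polynomial.degree_le_natDegree
        (by exact_mod_cast lt_of_le_of_lt hp hStS)
    have hpi := Lagrange.eq_interpolate (v := id) hinj hdlt
    conv_rhs => rw [hpi]
    rw [Lagrange.interpolate_apply, Polynomial.eval_finset_sum]
    refine Finset.sum_congr rfl fun i hi => ?_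
    rw [Polynomial.eval_mul, Polynomial.eval_C]
    exact mul_comm _ _
  have hE1 : ∀ i ∈ S, ∀ y : F, MvPolynomial.eval ![i, y] g = (f i).eval y := by
    intro i hi y
    rw [hev]
    rw [Finset.sum_eq_single_of_mem i hi]
    · rw [show Polynomial.eval i (Lagrange.basis S id i) = 1 from
        Lagrange.eval_basis_self hinj hi, one_mul]
    · intro b hb hbi
      rw [show Polynomial.eval i (Lagrange.basis S id b) = 0 from
        Lagrange.eval_basis_of_ne (v := id) hbi hi, zero_mul]
  -- symmetry
  have hren : MvPolynomial.rename (Equiv.swap (0 : Fin 2) 1) g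
      = ∑ i ∈ S, B (Lagrange.basis S id i) * A (f i) := by
    rw [hgdef, map_sum]
    refine Finset.sum_congr rfl fun i hi => ?_
    rw [map_mul]
    congr 1
    · rw [hA, hB, ← Polynomial.aeval_algHom_apply, rename_X, Equiv.swap_apply_left]
    · rw [hA, hB, ← Polynomial.aeval_algHom_apply, rename_X, Equiv.swap_apply_right]
  have hrev : ∀ x y : F, MvPolynomial.eval ![x, y] (MvPolynomial.rename (Equiv.swap (0 : Fin 2) 1) g)
      = ∑ i ∈ S, (f i).eval x * (Lagrange.basis S id i).eval y := by
    intro x y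
    rw [hren, map_sum]
    refine Finset.sum_congr rfl fun i hi => ?_
    rw [map_mul, hA, hB, helper_eval_aeval, helper_eval_aeval]
    simp only [Matrix.cons_val_zero, Matrix.cons_val_one, Matrix.head_cons]
    ring
  have hsub0 : MvPolynomial.rename (Equiv.swap (0 : Fin 2) 1) g - g = 0 := by
    have e0 : degreeOf 0 (MvPolynomial.rename (Equiv.swap (0 : Fin 2) 1) g) = degreeOf 1 g := by
      have := degreeOf_rename_of_injective (Equiv.swap (0 : Fin 2) 1).injective (p := g) 1
      rwa [Equiv.swap_apply_right] at this
    have e1 : degreeOf 1 (MvPolynomial.rename (Equiv.swap (0 : Fin 2) 1) g) = degreeOf 0 g := by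
      have := degreeOf_rename_of_injective (Equiv.swap (0 : Fin 2) 1).injective (p := g) 0
      rwa [Equiv.swap_apply_left] at this
    refine helper_vanish2 hStS _ ?_ ?_ ?_
    · exact (degreeOf_sub_le _ _ _).trans (max_le (e0 ▸ hd1) hd0)
    · exact (degreeOf_sub_le _ _ _).trans (max_le (e1 ▸ hd0) hd1)
    · intro x hx j hj
      rw [map_sub]
      have L : MvPolynomial.eval ![x, j] (MvPolynomial.rename (Equiv.swap (0 : Fin 2) 1) g)
          = (f j).eval x := by
        rw [hrev]
        exact hsingle (fun i => (f i).eval x) j hj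
      have R : MvPolynomial.eval ![x, j] g = (f j).eval x := by
        rw [hev]
        have : ∀ i ∈ S, (Lagrange.basis S id i).eval x * (f i).eval j
            = (Lagrange.basis S id i).eval x * (f j).eval i := by
          intro i hi
          rw [hsym i (hSN hi) j (hSN hj)]
        rw [Finset.sum_congr rfl this]
        exact hinterp (f j) (hdeg j (hSN hj)) x
      rw [L, R, sub_self]
  have hsymmg : MvSymm g := sub_eq_zero.mp hsub0
  have hswap_eval : ∀ x y : F, MvPolynomial.eval ![x, y] g = MvPolynomial.eval ![y, x] g := by
    intro x y
    conv_lhs => rw [← hsymmg]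
    rw [MvSymm] at hsymmg
    rw [eval_rename]
    have hfun : (![x, y] ∘ (Equiv.swap (0 : Fin 2) 1)) = ![y, x] := by
      funext k
      fin_cases k
      · simp [Equiv.swap_apply_left]
      · simp [Equiv.swap_apply_right]
    rw [hfun]
  have hE2 : ∀ x ∈ N, ∀ j ∈ S, MvPolynomial.eval ![x, j] g = (f x).eval j := by
    intro x hx j hj
    rw [hswap_eval x j, hE1 j hj x, hsym j (hSN hj) x hx]
  have hEval : ∀ i ∈ N, ∀ j ∈ N, MvPolynomial.eval ![i, j] g = (f i).eval j := by
    intro i hi j hj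
    have hq0 : MvPolynomial.aeval ![Polynomial.C i, Polynomial.X] g - f i = 0 := by
      apply Polynomial.eq_zero_of_natDegree_lt_card_of_eval_eq_zero' _ S
      · intro j' hj'
        rw [Polynomial.eval_sub, helper_pe_eval, hE2 i hi j' hj', sub_self]
      · refine lt_of_le_of_lt ?_ hStS
        refine (Polynomial.natDegree_sub_le _ _).trans ?_
        exact max_le ((helper_pe_natDegree i g).trans hd1) (hdeg i hi)
    have := congrArg (Polynomial.eval j) hq0
    rw [Polynomial.eval_sub, helper_pe_eval, Polynomial.eval_zero, sub_eq_zero] at this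
    exact this
  refine ⟨g, ⟨hd0, hd1, hsymmg, hEval⟩, ?_⟩
  rintro g' ⟨h0', h1', -, hev'⟩
  have hz : g' - g = 0 := by
    refine helper_vanish2 hStS _ ?_ ?_ ?_
    · exact (degreeOf_sub_le _ _ _).trans (max_le h0' hd0)
    · exact (degreeOf_sub_le _ _ _).trans (max_le h1' hd1)
    · intro x hx j hj
      rw [map_sub, hev' x (hSN hx) j (hSN hj), hEval x (hSN hx) j (hSN hj), sub_self]
  exact sub_eq_zero.mp hz
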